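/- Let S = (ℝ×(-1,1)) ∪ ((-2,2)×{-1,1}) ⊆ ℝ×[-1,1], with the subspace topology, so that S is a model strip whose lower and upper boundary parts are the intervals (-2,2)×{-1} and (-2,2)×{1}. Let ~ be the equivalence relation on S generated by (t,1) ~ (t,-1) for all t ∈ (-2,2), and let C = S/~ be the quotient space. Then C is homeomorphic to the open cylinder S¹ × ℝ. -/

import Mathlib

/-- The model strip `S = (ℝ × (-1,1)) ∪ ((-2,2) × {-1,1}) ⊆ ℝ × [-1,1]`, whose lower and upper
boundary parts are the intervals `(-2,2) × {-1}` and `(-2,2) × {1}`. -/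
def Strip13 : Set (ℝ × ℝ) :=
  (Set.univ ×ˢ Set.Ioo (-1 : ℝ) 1) ∪ (Set.Ioo (-2 : ℝ) 2 ×ˢ ({-1, 1} : Set ℝ))

/-- The gluing relation identifying `(t, 1)` with `(t, -1)` for `t ∈ (-2, 2)`; the quotient
`Quot Glue13` is the quotient of `Strip13` by the equivalence relation it generates. -/
def Glue13 (p q : Strip13) : Prop :=
  (p : ℝ × ℝ).1 = (q : ℝ × ℝ).1 ∧ (p : ℝ × ℝ).2 = 1 ∧ (q : ℝ × ℝ).2 = -1

open Real


/-- Horizontal stretching map: for fixed `y`, maps `s` to a point of the strip. -/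
noncomputable def thMap (s y : ℝ) : ℝ := (1 - |y|) * s + 2 * |y| * s / (1 + |s|)

/-- Inverse of `thMap` in the first variable. -/
noncomputable def etMap (t y : ℝ) : ℝ :=
  2 * t / ((1 + |y| - |t|) + Real.sqrt ((1 + |y| - |t|) ^ 2 + 4 * (1 - |y|) * |t|))

lemma thMap_neg (s y : ℝ) : thMap (-s) y = - thMap s y := by
  simp only [thMap, abs_neg]
  ring

lemma etMap_neg (t y : ℝ) : etMap (-t) y = - etMap t y := by
  simp only [etMap, abs_neg]
  ring

lemma thMap_zero (y : ℝ) : thMap 0 y = 0 := by simp [thMap]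

lemma thMap_eq {s : ℝ} (y : ℝ) (hs : 0 ≤ s) :
    thMap s y * (1 + s) = (1 - |y|) * s ^ 2 + (1 + |y|) * s := by
  have h : (0:ℝ) < 1 + s := by linarith
  rw [thMap, abs_of_nonneg hs]
  field_simp
  ring

lemma denom_pos {t y : ℝ} (hy : |y| ≤ 1) (h2 : |y| = 1 → |t| < 2) :
    0 < (1 + |y| - |t|) + Real.sqrt ((1 + |y| - |t|) ^ 2 + 4 * (1 - |y|) * |t|) := by
  set B := 1 + |y| - |t| with hB
  by_cases hb : 0 < B
  · have h := Real.sqrt_nonneg (B ^ 2 + 4 * (1 - |y|) * |t|)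
    linarith
  · push_neg at hb
    have h4 : 0 < 4 * (1 - |y|) * |t| := by
      rcases eq_or_lt_of_le hy with h1 | h1
      · exfalso
        have ht2 := h2 h1
        rw [hB, h1] at hb
        linarith
      · have ht : t ≠ 0 := by
          intro h0
          rw [hB, h0] at hb
          simp at hb
          have := abs_nonneg y
          linarith
        have := abs_pos.2 ht
        nlinarith
    have hlt : -B < Real.sqrt (B ^ 2 + 4 * (1 - |y|) * |t|) := by
      rw [Real.lt_sqrt (by linarith)]
      nlinarith
    linarith

lemma etMap_thMap_of_nonneg {s y : ℝ} (hy : |y| ≤ 1) (hs : 0 ≤ s) :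
    etMap (thMap s y) y = s := by
  rcases eq_or_lt_of_le hs with h0 | hs'
  · rw [← h0, thMap_zero]
    simp [etMap]
  · set t := thMap s y with htdef
    have hy0 := abs_nonneg y
    have hts : t * (1 + s) = (1 - |y|) * s ^ 2 + (1 + |y|) * s := thMap_eq y hs
    have hs1 : (0:ℝ) < 1 + s := by linarith
    have ht0 : 0 < t := by nlinarith
    have htabs : |t| = t := abs_of_pos ht0
    set B := 1 + |y| - t with hB
    have hnum : 0 ≤ 2 * t - s * B := by nlinarith
    have key : ((1 + |y| - t) ^ 2 + 4 * (1 - |y|) * t) * s ^ 2 = (2 * t - s * B) ^ 2 := by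
      rw [hB]
      linear_combination (-4 * t) * hts
    have hΔ : (1 + |y| - t) ^ 2 + 4 * (1 - |y|) * t = ((2 * t - s * B) / s) ^ 2 := by
      rw [div_pow, eq_div_iff (by positivity : s ^ 2 ≠ 0)]
      exact key
    rw [etMap, htabs, ← hB, hΔ, Real.sqrt_sq (div_nonneg hnum hs'.le)]
    rw [div_eq_iff]
    · field_simp
      ring
    · have : B + (2 * t - s * B) / s = 2 * t / s := by
        field_simp
        ring
      rw [this]
      positivity

lemma etMap_thMap {s y : ℝ} (hy : |y| ≤ 1) : etMap (thMap s y) y = s := by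
  rcases le_or_gt 0 s with hs | hs
  · exact etMap_thMap_of_nonneg hy hs
  · conv_lhs => rw [← neg_neg s, thMap_neg, etMap_neg]
    rw [etMap_thMap_of_nonneg hy (neg_nonneg.2 hs.le), neg_neg]

lemma thMap_etMap_of_nonneg {t y : ℝ} (hy : |y| ≤ 1) (ht : 0 ≤ t) (h2 : |y| = 1 → |t| < 2) :
    thMap (etMap t y) y = t := by
  have hD := denom_pos hy h2
  have habs : |t| = t := abs_of_nonneg ht
  rw [habs] at hD
  set B := 1 + |y| - t with hB
  set Δ := B ^ 2 + 4 * (1 - |y|) * t with hΔdef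
  have hΔ0 : 0 ≤ Δ := by
    have h1 : 0 ≤ 1 - |y| := by linarith
    positivity
  have hsq : Real.sqrt Δ ^ 2 = Δ := Real.sq_sqrt hΔ0
  have hsval : etMap t y = 2 * t / (B + Real.sqrt Δ) := by
    rw [etMap, habs]
  set s := etMap t y with hs
  have hs0 : 0 ≤ s := by
    rw [hsval]
    exact div_nonneg (by linarith) hD.le
  have key : (1 - |y|) * (2 * t) ^ 2 + (1 + |y|) * (2 * t) * (B + Real.sqrt Δ)
      = t * (B + Real.sqrt Δ) ^ 2 + t * (2 * t) * (B + Real.sqrt Δ) := by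
    have h2' : Real.sqrt Δ ^ 2 = B ^ 2 + 4 * (1 - |y|) * t := by rw [hsq, hΔdef]
    rw [hB] at h2' ⊢
    linear_combination (-t) * h2'
  have hquad : (1 - |y|) * s ^ 2 + (1 + |y|) * s = t * (1 + s) := by
    rw [hsval]
    have hDne : B + Real.sqrt Δ ≠ 0 := ne_of_gt hD
    have e1 : (1 - |y|) * (2 * t / (B + Real.sqrt Δ)) ^ 2 + (1 + |y|) * (2 * t / (B + Real.sqrt Δ))
        = ((1 - |y|) * (2 * t) ^ 2 + (1 + |y|) * (2 * t) * (B + Real.sqrt Δ)) / (B + Real.sqrt Δ) ^ 2 := by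
      field_simp
    have e2 : t * (1 + 2 * t / (B + Real.sqrt Δ))
        = (t * (B + Real.sqrt Δ) ^ 2 + t * (2 * t) * (B + Real.sqrt Δ)) / (B + Real.sqrt Δ) ^ 2 := by
      field_simp
    rw [e1, e2, key]
  have h1s : (0:ℝ) < 1 + s := by linarith
  have := thMap_eq y hs0
  have hfin : thMap s y * (1 + s) = t * (1 + s) := by rw [this]; linarith [hquad]
  exact mul_right_cancel₀ (ne_of_gt h1s) hfin

lemma thMap_etMap {t y : ℝ} (hy : |y| ≤ 1) (h2 : |y| = 1 → |t| < 2) :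
    thMap (etMap t y) y = t := by
  rcases le_or_gt 0 t with ht | ht
  · exact thMap_etMap_of_nonneg hy ht h2
  · nth_rewrite 1 [← neg_neg t]
    rw [etMap_neg, thMap_neg, thMap_etMap_of_nonneg hy (neg_nonneg.2 ht.le)
      (by rw [abs_neg]; exact h2), neg_neg]

lemma strip_bounds {p : ℝ × ℝ} (hp : p ∈ Strip13) :
    |p.2| ≤ 1 ∧ (|p.2| = 1 → |p.1| < 2) := by
  rcases hp with h | h
  · have h2 := h.2
    rw [Set.mem_Ioo] at h2
    have : |p.2| < 1 := abs_lt.2 h2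
    exact ⟨this.le, fun he => absurd he this.ne⟩
  · have h1 := h.1
    rw [Set.mem_Ioo] at h1
    have h2 := h.2
    have : |p.2| = 1 := by
      rcases h2 with h2 | h2 <;> rw [h2] <;> simp
    exact ⟨this.le, fun _ => abs_lt.2 h1⟩

lemma thMap_mem {s y : ℝ} (hy : |y| ≤ 1) : (thMap s y, y) ∈ Strip13 := by
  rcases eq_or_lt_of_le hy with h1 | h1
  · right
    constructor
    · have hd : (0:ℝ) < 1 + |s| := by positivity
      have hval : thMap s y = 2 * s / (1 + |s|) := by rw [thMap, h1]; ring
      have habs : |thMap s y| < 2 := by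
        rw [hval, abs_div, abs_of_pos hd, abs_mul]
        rw [div_lt_iff₀ hd]
        have : |(2:ℝ)| = 2 := by norm_num
        rw [this]
        linarith [abs_nonneg s]
      exact Set.mem_Ioo.2 (abs_lt.1 habs)
    · rcases (abs_eq (by norm_num : (0:ℝ) ≤ 1)).1 h1 with h | h
      · right; exact h
      · left; exact h
  · exact Or.inl ⟨Set.mem_univ _, Set.mem_Ioo.2 (abs_lt.1 h1)⟩

lemma yPlus_bound (r : ℝ) : |Real.arccos r / π| ≤ 1 := by
  rw [abs_div, abs_of_nonneg (Real.arccos_nonneg r), abs_of_pos Real.pi_pos,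
    div_le_one Real.pi_pos]
  exact Real.arccos_le_pi r

noncomputable def eFun : Strip13 → Circle × ℝ := fun p =>
  (Circle.exp (π * (p : ℝ × ℝ).2), etMap (p : ℝ × ℝ).1 (p : ℝ × ℝ).2)

lemma eFun_glue : ∀ a b, Glue13 a b → eFun a = eFun b := by
  rintro ⟨⟨t1, y1⟩, h1⟩ ⟨⟨t2, y2⟩, h2⟩ ⟨ht, hy1, hy2⟩
  simp only at ht hy1 hy2
  subst ht hy1 hy2
  unfold eFun
  simp only
  congr 1
  · rw [mul_one, mul_neg_one]
    apply Circle.ext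
    rw [Circle.coe_exp, Circle.coe_exp, Complex.ofReal_neg, neg_mul, Complex.exp_neg,
      Complex.exp_pi_mul_I]
    norm_num
  · unfold etMap
    norm_num

noncomputable def eQuot : Quot Glue13 → Circle × ℝ := Quot.lift eFun eFun_glue

lemma eQuot_continuous : Continuous eQuot := by
  apply continuous_quot_lift
  apply Continuous.prodMk
  · exact Circle.exp.continuous.comp (continuous_const.mul
      (continuous_snd.comp continuous_subtype_val))
  · unfold etMap
    apply Continuous.div
    · fun_prop
    · fun_prop
    · intro p
      have hb := strip_bounds p.2
      exact ne_of_gt (denom_pos hb.1 hb.2)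

/-- The `y`-parameter associated to a circle point with nonnegative imaginary part. -/
noncomputable def yP (c : Circle) : ℝ := Real.arccos (c : ℂ).re / π

lemma yP_bound (c : Circle) : |yP c| ≤ 1 := yPlus_bound _

lemma yP_neg_bound (c : Circle) : |(-(yP c))| ≤ 1 := by rw [abs_neg]; exact yP_bound c

noncomputable def gFun : Circle × ℝ → Quot Glue13 := fun x =>
  if 0 ≤ (x.1 : ℂ).im then
    Quot.mk _ ⟨(thMap x.2 (yP x.1), yP x.1), thMap_mem (yP_bound x.1)⟩
  else
    Quot.mk _ ⟨(thMap x.2 (-(yP x.1)), -(yP x.1)), thMap_mem (yP_neg_bound x.1)⟩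

lemma mk_eq_of_val_eq {a b : Strip13} (h : (a : ℝ × ℝ) = b) :
    Quot.mk Glue13 a = Quot.mk Glue13 b := by
  congr 1
  exact Subtype.ext h

lemma mk_glue {t : ℝ} (h1 : ((t, (1:ℝ)) : ℝ × ℝ) ∈ Strip13)
    (h2 : ((t, (-1:ℝ)) : ℝ × ℝ) ∈ Strip13) :
    Quot.mk Glue13 ⟨(t, 1), h1⟩ = Quot.mk Glue13 ⟨(t, -1), h2⟩ :=
  Quot.sound ⟨rfl, rfl, rfl⟩

lemma circle_re_im (c : Circle) : (c : ℂ).re ^ 2 + (c : ℂ).im ^ 2 = 1 := by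
  have := Circle.normSq_coe c
  rw [Complex.normSq_apply] at this
  nlinarith [this]

lemma thMap_continuous : Continuous fun x : ℝ × ℝ => thMap x.1 x.2 := by
  unfold thMap
  apply Continuous.add
  · fun_prop
  · apply Continuous.div
    · fun_prop
    · fun_prop
    · intro x
      positivity

lemma gFun_continuous : Continuous gFun := by
  have hyP : Continuous fun x : Circle × ℝ => yP x.1 := by
    unfold yP
    apply Continuous.div_const
    exact Real.continuous_arccos.comp (Complex.continuous_re.comp
      (continuous_subtype_val.comp continuous_fst))
  have him : Continuous fun x : Circle × ℝ => (x.1 : ℂ).im :=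
    Complex.continuous_im.comp (continuous_subtype_val.comp continuous_fst)
  have hbr1 : Continuous fun x : Circle × ℝ =>
      Quot.mk Glue13 ⟨(thMap x.2 (yP x.1), yP x.1), thMap_mem (yP_bound x.1)⟩ := by
    apply continuous_quot_mk.comp
    apply Continuous.subtype_mk
    exact (thMap_continuous.comp (continuous_snd.prodMk hyP)).prodMk hyP
  have hbr2 : Continuous fun x : Circle × ℝ =>
      Quot.mk Glue13 ⟨(thMap x.2 (-(yP x.1)), -(yP x.1)), thMap_mem (yP_neg_bound x.1)⟩ := by
    apply continuous_quot_mk.comp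
    apply Continuous.subtype_mk
    exact (thMap_continuous.comp (continuous_snd.prodMk hyP.neg)).prodMk hyP.neg
  unfold gFun
  refine Continuous.if_le hbr1 hbr2 continuous_const him ?_
  intro x hx
  have hsum := circle_re_im x.1
  rw [← hx] at hsum
  have : ((x.1 : ℂ).re - 1) * ((x.1 : ℂ).re + 1) = 0 := by nlinarith
  rcases mul_eq_zero.1 this with h | h
  · have hre : (x.1 : ℂ).re = 1 := by linarith
    have : yP x.1 = 0 := by rw [yP, hre, Real.arccos_one, zero_div]
    apply mk_eq_of_val_eq
    show ((thMap x.2 (yP x.1), yP x.1) : ℝ × ℝ) = (thMap x.2 (-(yP x.1)), -(yP x.1))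
    rw [this]
    norm_num
  · have hre : (x.1 : ℂ).re = -1 := by linarith
    have hy1 : yP x.1 = 1 := by
      rw [yP, hre, Real.arccos_neg_one, div_self (ne_of_gt Real.pi_pos)]
    have hth : thMap x.2 (1:ℝ) = thMap x.2 (-1:ℝ) := by
      unfold thMap; norm_num
    -- reduce both sides to canonical form
    have m2 : ((thMap x.2 1, (-1:ℝ)) : ℝ × ℝ) ∈ Strip13 := by
      rw [hth]; exact thMap_mem (by norm_num)
    have e1 : Quot.mk Glue13 ⟨(thMap x.2 (yP x.1), yP x.1), thMap_mem (yP_bound x.1)⟩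
        = Quot.mk Glue13 ⟨(thMap x.2 1, 1), thMap_mem (by norm_num)⟩ :=
      mk_eq_of_val_eq (show ((thMap x.2 (yP x.1), yP x.1) : ℝ × ℝ) = (thMap x.2 1, 1) by
        rw [hy1])
    have e2 : Quot.mk Glue13 ⟨(thMap x.2 (-(yP x.1)), -(yP x.1)), thMap_mem (yP_neg_bound x.1)⟩
        = Quot.mk Glue13 ⟨(thMap x.2 1, -1), m2⟩ :=
      mk_eq_of_val_eq
        (show ((thMap x.2 (-(yP x.1)), -(yP x.1)) : ℝ × ℝ) = (thMap x.2 1, -1) by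
          rw [hy1, hth])
    rw [e1, e2]
    exact mk_glue _ _

lemma gFun_pos {c : Circle} {s : ℝ} (h : 0 ≤ (c : ℂ).im) :
    gFun (c, s) = Quot.mk _ ⟨(thMap s (yP c), yP c), thMap_mem (yP_bound c)⟩ := by
  simp only [gFun, if_pos h]

lemma gFun_negbr {c : Circle} {s : ℝ} (h : ¬ 0 ≤ (c : ℂ).im) :
    gFun (c, s) = Quot.mk _ ⟨(thMap s (-(yP c)), -(yP c)), thMap_mem (yP_neg_bound c)⟩ := by
  simp only [gFun, if_neg h]

lemma exp_im (y : ℝ) : ((Circle.exp y : ℂ)).im = Real.sin y := by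
  rw [Circle.coe_exp]; exact Complex.exp_ofReal_mul_I_im _

lemma exp_re (y : ℝ) : ((Circle.exp y : ℂ)).re = Real.cos y := by
  rw [Circle.coe_exp]; exact Complex.exp_ofReal_mul_I_re _

lemma gFun_left_inv : ∀ q : Quot Glue13, gFun (eQuot q) = q := by
  apply Quot.ind
  rintro ⟨⟨t, y⟩, hp⟩
  obtain ⟨hy, h2⟩ := strip_bounds hp
  simp only at hy h2
  have heq : eQuot (Quot.mk Glue13 ⟨(t, y), hp⟩) = (Circle.exp (π * y), etMap t y) := rfl
  rw [heq]
  have hy1 : y ≤ 1 := le_of_abs_le hy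
  have hym1 : -1 ≤ y := neg_le_of_abs_le hy
  have hpi := Real.pi_pos
  rcases le_or_gt 0 y with hy0 | hy0
  · have hcond : 0 ≤ ((Circle.exp (π * y) : ℂ)).im := by
      rw [exp_im]
      exact Real.sin_nonneg_of_nonneg_of_le_pi (by positivity) (by nlinarith)
    rw [gFun_pos hcond]
    have hyPv : yP (Circle.exp (π * y)) = y := by
      rw [yP, exp_re, Real.arccos_cos (by positivity) (by nlinarith),
        mul_div_cancel_left₀ _ (ne_of_gt hpi)]
    apply mk_eq_of_val_eq
    show ((thMap (etMap t y) (yP (Circle.exp (π * y))), yP (Circle.exp (π * y))) : ℝ × ℝ)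
      = (t, y)
    rw [hyPv, thMap_etMap hy h2]
  · rcases eq_or_lt_of_le hym1 with hm1 | hm1
    · -- y = -1
      subst hm1  -- ?? hm1 : -1 = y
      have h2' : |t| < 2 := h2 (by norm_num)
      have hcond : 0 ≤ ((Circle.exp (π * (-1:ℝ)) : ℂ)).im := by
        rw [exp_im, mul_neg_one, Real.sin_neg, Real.sin_pi]
        norm_num
      rw [gFun_pos hcond]
      have hyPv : yP (Circle.exp (π * (-1:ℝ))) = 1 := by
        rw [yP, exp_re, mul_neg_one, Real.cos_neg, Real.cos_pi, Real.arccos_neg_one,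
          div_self (ne_of_gt hpi)]
      have het : etMap t (-1:ℝ) = etMap t 1 := by unfold etMap; norm_num
      have hth : thMap (etMap t (1:ℝ)) (1:ℝ) = t :=
        thMap_etMap (by norm_num) (fun _ => h2')
      have m1 : ((t, (1:ℝ)) : ℝ × ℝ) ∈ Strip13 := by
        right
        exact ⟨Set.mem_Ioo.2 (abs_lt.1 h2'), Or.inr rfl⟩
      have e1 : Quot.mk Glue13 ⟨(thMap (etMap t (-1:ℝ)) (yP (Circle.exp (π * (-1:ℝ)))),
            yP (Circle.exp (π * (-1:ℝ)))), thMap_mem (yP_bound _)⟩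
          = Quot.mk Glue13 ⟨(t, 1), m1⟩ :=
        mk_eq_of_val_eq (by
          show ((thMap (etMap t (-1:ℝ)) (yP (Circle.exp (π * (-1:ℝ)))),
            yP (Circle.exp (π * (-1:ℝ)))) : ℝ × ℝ) = (t, 1)
          rw [hyPv, het, hth])
      rw [e1]
      exact mk_glue _ _
    · -- -1 < y < 0
      have hcond : ¬ 0 ≤ ((Circle.exp (π * y) : ℂ)).im := by
        rw [exp_im]
        push_neg
        exact Real.sin_neg_of_neg_of_neg_pi_lt (by nlinarith) (by nlinarith)
      rw [gFun_negbr hcond]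
      have hyPv : -(yP (Circle.exp (π * y))) = y := by
        rw [yP, exp_re, ← Real.cos_neg, Real.arccos_cos (by nlinarith) (by nlinarith)]
        field_simp
      apply mk_eq_of_val_eq
      show ((thMap (etMap t y) (-(yP (Circle.exp (π * y)))), -(yP (Circle.exp (π * y)))) : ℝ × ℝ)
        = (t, y)
      rw [hyPv, thMap_etMap hy h2]

lemma gFun_right_inv : ∀ x : Circle × ℝ, eQuot (gFun x) = x := by
  rintro ⟨c, s⟩
  have habs : |(c : ℂ).re| ≤ 1 := by
    have := Complex.abs_re_le_norm (c : ℂ)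
    rwa [Circle.norm_coe c] at this
  have hre2 := abs_le.1 habs
  have hsum := circle_re_im c
  have hpi := Real.pi_pos
  rcases le_or_gt 0 (c : ℂ).im with h | h
  · rw [gFun_pos h]
    have heq : eQuot (Quot.mk Glue13 ⟨(thMap s (yP c), yP c), thMap_mem (yP_bound c)⟩)
        = (Circle.exp (π * yP c), etMap (thMap s (yP c)) (yP c)) := rfl
    rw [heq, etMap_thMap (yP_bound c)]
    have harg : π * yP c = Real.arccos (c : ℂ).re := by
      rw [yP]; field_simp
    have h1 : Circle.exp (π * yP c) = c := by
      rw [harg]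
      apply Circle.ext
      rw [Circle.coe_exp]
      apply Complex.ext
      · rw [Complex.exp_ofReal_mul_I_re]
        exact Real.cos_arccos hre2.1 hre2.2
      · rw [Complex.exp_ofReal_mul_I_im, Real.sin_arccos,
          show 1 - (c : ℂ).re ^ 2 = (c : ℂ).im ^ 2 by linarith]
        exact Real.sqrt_sq h
    rw [h1]
  · rw [gFun_negbr (not_le.2 h)]
    have heq : eQuot (Quot.mk Glue13 ⟨(thMap s (-(yP c)), -(yP c)), thMap_mem (yP_neg_bound c)⟩)
        = (Circle.exp (π * (-(yP c))), etMap (thMap s (-(yP c))) (-(yP c))) := rfl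
    rw [heq, etMap_thMap (yP_neg_bound c)]
    have harg : π * (-(yP c)) = -(Real.arccos (c : ℂ).re) := by
      rw [yP]; field_simp
    have h1 : Circle.exp (π * (-(yP c))) = c := by
      rw [harg]
      apply Circle.ext
      rw [Circle.coe_exp]
      apply Complex.ext
      · rw [Complex.exp_ofReal_mul_I_re, Real.cos_neg]
        exact Real.cos_arccos hre2.1 hre2.2
      · rw [Complex.exp_ofReal_mul_I_im, Real.sin_neg, Real.sin_arccos,
          show 1 - (c : ℂ).re ^ 2 = (-(c : ℂ).im) ^ 2 by ring_nf; linarith,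
          Real.sqrt_sq (by linarith)]
        ring
    rw [h1]

/-- the quotient `C = S/~` of the model strip `S` obtained by gluing `(t, 1)` to
`(t, -1)`, `t ∈ (-2, 2)`, is homeomorphic to the open cylinder `S¹ × ℝ`. -/
theorem stmt_13 : Nonempty (Quot Glue13 ≃ₜ Circle × ℝ) := by
  exact ⟨{ toFun := eQuot
           invFun := gFun
           left_inv := gFun_left_inv
           right_inv := gFun_right_inv
           continuous_toFun := eQuot_continuous
           continuous_invFun := gFun_continuous }⟩
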